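/- arXiv:2005.11835 — 2 statements merged into one kernel-verified Lean document; each statement's English description precedes it below -/
import Mathlib

section
/- Fix a prime r, integers n₀ and k, and a positive integer M₀. For a positive integer q define Σ(q) := ∑_{c = 0}^{q/gcd(q,M₀) − 1} ∑_{a = 1, gcd(a,q)=1}^{q} e( −a((n₀ + c M₀)^r + k)/q ). Then Σ is multiplicative: for any coprime positive integers q₁, q₂ one has Σ(q₁ q₂) = Σ(q₁) Σ(q₂). -/
/-- The exponential sum
`Σ(q) = ∑_{c = 0}^{q/gcd(q,M₀) - 1} ∑_{a mod q, gcd(a,q) = 1} e(-a((n₀ + c M₀)^r + k)/q)`,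
where `e(w) = exp(2πiw)`. -/
noncomputable def singularSum (r : ℕ) (n₀ k : ℤ) (M₀ : ℕ) (q : ℕ) : ℂ :=
  ∑ c ∈ Finset.range (q / Nat.gcd q M₀),
    ∑ a ∈ (Finset.Icc 1 q).filter (fun a => Nat.gcd a q = 1),
      Complex.exp (2 * Real.pi * Complex.I *
        (-(a : ℂ) * (((n₀ + (c : ℤ) * (M₀ : ℤ)) ^ r + k : ℤ) : ℂ) / (q : ℂ)))

open Finset

/-- The inner exponential sum `∑_{a mod q, gcd(a,q)=1} e(-a m / q)`. -/
noncomputable def innerA (q : ℕ) (m : ℤ) : ℂ :=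
  ∑ a ∈ (Finset.Icc 1 q).filter (fun a => Nat.gcd a q = 1),
    Complex.exp (2 * Real.pi * Complex.I * (-(a : ℂ) * (m : ℂ) / (q : ℂ)))

lemma innerA_eq_units (q : ℕ) [NeZero q] (m : ℤ) :
    innerA q m = ∑ u : (ZMod q)ˣ, ZMod.stdAddChar ((-((u : ZMod q)) * (m : ZMod q))) := by
  have hq : 0 < q := Nat.pos_of_ne_zero (NeZero.ne q)
  rw [innerA]
  refine Finset.sum_bij' (fun a ha => ZMod.unitOfCoprime a (Finset.mem_filter.mp ha).2)
    (fun u _ => if (u : ZMod q).val = 0 then q else (u : ZMod q).val)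
    (fun a ha => Finset.mem_univ _) ?_ ?_ ?_ ?_
  · -- j maps into s
    intro u _
    by_cases h0 : (u : ZMod q).val = 0
    · have hcop := ZMod.val_coe_unit_coprime u
      rw [h0] at hcop
      have hq1 : q = 1 := by simpa [Nat.Coprime] using hcop
      simp [h0, hq1]
    · have hcop := ZMod.val_coe_unit_coprime u
      have hlt : (u : ZMod q).val < q := ZMod.val_lt _
      simp only [if_neg h0, Finset.mem_filter, Finset.mem_Icc]
      exact ⟨⟨Nat.one_le_iff_ne_zero.mpr h0, hlt.le⟩, hcop⟩
  · -- left inverse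
    intro a ha
    obtain ⟨hmem, hcop⟩ := Finset.mem_filter.mp ha
    obtain ⟨h1, h2⟩ := Finset.mem_Icc.mp hmem
    have hval : ((ZMod.unitOfCoprime a hcop : ZMod q)).val = a % q := by
      rw [ZMod.coe_unitOfCoprime, ZMod.val_natCast]
    by_cases hmod : a % q = 0
    · have : q ∣ a := Nat.dvd_of_mod_eq_zero hmod
      have : a = q := le_antisymm h2 (Nat.le_of_dvd (by omega) this)
      simp [hval, hmod, this]
    · have : a < q := by
        rcases lt_or_eq_of_le h2 with h | h
        · exact h
        · exfalso; apply hmod; rw [h, Nat.mod_self]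
      have ha0 : a ≠ 0 := by omega
      simp [hval, Nat.mod_eq_of_lt this, ha0]
  · -- right inverse
    intro u _
    apply Units.ext
    rw [ZMod.coe_unitOfCoprime]
    show ((if (u : ZMod q).val = 0 then q else (u : ZMod q).val : ℕ) : ZMod q) = ↑u
    by_cases h0 : (u : ZMod q).val = 0
    · rw [if_pos h0, ZMod.natCast_self]
      exact ((ZMod.val_eq_zero _).mp h0).symm
    · rw [if_neg h0, ZMod.natCast_val, ZMod.cast_id]
  · -- values agree
    intro a ha
    rw [ZMod.coe_unitOfCoprime]
    have : -((a : ZMod q)) * (m : ZMod q) = (((-(a * m) : ℤ)) : ZMod q) := by push_cast; ring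
    rw [this, ZMod.stdAddChar_coe]
    congr 1
    push_cast
    ring

lemma innerA_congr (q : ℕ) (hq : 0 < q) {m m' : ℤ} (h : m ≡ m' [ZMOD q]) :
    innerA q m = innerA q m' := by
  haveI : NeZero q := ⟨hq.ne'⟩
  rw [innerA_eq_units, innerA_eq_units, (ZMod.intCast_eq_intCast_iff _ _ _).mpr h]

lemma innerA_mult (q₁ q₂ : ℕ) (hq₁ : 0 < q₁) (hq₂ : 0 < q₂) (hco : Nat.Coprime q₁ q₂) (m : ℤ) :
    innerA (q₁ * q₂) m = innerA q₁ m * innerA q₂ m := by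
  haveI : NeZero q₁ := ⟨hq₁.ne'⟩
  haveI : NeZero q₂ := ⟨hq₂.ne'⟩
  haveI : NeZero (q₁ * q₂) := ⟨by positivity⟩
  -- Bezout
  obtain ⟨u, v, huv⟩ : ∃ u v : ℤ, u * q₁ + v * q₂ = 1 := by
    have h : IsCoprime (q₁ : ℤ) (q₂ : ℤ) := by
      rw [Int.isCoprime_iff_gcd_eq_one]
      exact_mod_cast hco
    obtain ⟨a, b, hab⟩ := h
    exact ⟨a, b, hab⟩
  -- v is a unit mod q₁ (inverse of q₂), u is a unit mod q₂ (inverse of q₁)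
  have hvq : ((v : ZMod q₁)) * ((q₂ : ℤ) : ZMod q₁) = 1 := by
    have : ((v * q₂ : ℤ) : ZMod q₁) = ((1 - u * q₁ : ℤ) : ZMod q₁) := by
      congr 1; linarith
    push_cast at this ⊢
    rw [this]; simp
  have huq : ((u : ZMod q₂)) * ((q₁ : ℤ) : ZMod q₂) = 1 := by
    have : ((u * q₁ : ℤ) : ZMod q₂) = ((1 - v * q₂ : ℤ) : ZMod q₂) := by
      congr 1; linarith
    push_cast at this ⊢
    rw [this]; simp
  set V : (ZMod q₁)ˣ := Units.mkOfMulEqOne _ _ hvq with hV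
  set U : (ZMod q₂)ˣ := Units.mkOfMulEqOne _ _ huq with hU
  -- the equivalence
  let e₁ : (ZMod (q₁ * q₂))ˣ ≃ (ZMod q₁)ˣ × (ZMod q₂)ˣ :=
    (Units.mapEquiv (ZMod.chineseRemainder hco).toMulEquiv).toEquiv.trans
      MulEquiv.prodUnits.toEquiv
  let e : (ZMod (q₁ * q₂))ˣ ≃ (ZMod q₁)ˣ × (ZMod q₂)ˣ :=
    e₁.trans ((Equiv.mulRight V).prodCongr (Equiv.mulRight U))
  have key : ∀ w : (ZMod (q₁ * q₂))ˣ,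
      ZMod.stdAddChar (-((w : ZMod (q₁*q₂))) * (m : ZMod (q₁*q₂))) =
        ZMod.stdAddChar (-(((e w).1 : ZMod q₁)) * (m : ZMod q₁)) *
        ZMod.stdAddChar (-(((e w).2 : ZMod q₂)) * (m : ZMod q₂)) := by
    intro w
    set a : ℤ := ((w : ZMod (q₁*q₂)).val : ℤ) with ha
    have hw : ((w : ZMod (q₁*q₂))) = ((a : ℤ) : ZMod (q₁*q₂)) := by
      simp [ha]
    have h1 : ((e w).1 : ZMod q₁) = ((a * v : ℤ) : ZMod q₁) := by
      simp [e, e₁, MulEquiv.prodUnits, Units.coe_mapEquiv, hw, V]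
    have h2 : ((e w).2 : ZMod q₂) = ((a * u : ℤ) : ZMod q₂) := by
      simp [e, e₁, MulEquiv.prodUnits, Units.coe_mapEquiv, hw, U]
    have e1 : -((w : ZMod (q₁*q₂))) * (m : ZMod (q₁*q₂)) = ((-(a * m) : ℤ) : ZMod (q₁*q₂)) := by
      rw [hw]; push_cast; ring
    have e2 : -(((e w).1 : ZMod q₁)) * (m : ZMod q₁) = ((-(a * v * m) : ℤ) : ZMod q₁) := by
      rw [h1]; push_cast; ring
    have e3 : -(((e w).2 : ZMod q₂)) * (m : ZMod q₂) = ((-(a * u * m) : ℤ) : ZMod q₂) := by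
      rw [h2]; push_cast; ring
    rw [e1, e2, e3, ZMod.stdAddChar_coe, ZMod.stdAddChar_coe, ZMod.stdAddChar_coe,
      ← Complex.exp_add]
    congr 1
    have hq₁' : (q₁ : ℂ) ≠ 0 := Nat.cast_ne_zero.mpr hq₁.ne'
    have hq₂' : (q₂ : ℂ) ≠ 0 := Nat.cast_ne_zero.mpr hq₂.ne'
    have h1c : (u : ℂ) * q₁ + (v : ℂ) * q₂ = 1 := by
      exact_mod_cast congrArg (fun z : ℤ => (z : ℂ)) huv
    push_cast
    field_simp
    ring_nf
    linear_combination ((a : ℂ) * m) * h1c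
  rw [innerA_eq_units, innerA_eq_units, innerA_eq_units, Finset.sum_mul_sum,
    ← Fintype.sum_prod_type']
  exact Fintype.sum_equiv e _ _ key

/-- CRT splitting of a range sum. -/
lemma range_crt_sum {Q₁ Q₂ : ℕ} (hQ₁ : 0 < Q₁) (hQ₂ : 0 < Q₂) (hco : Nat.Coprime Q₁ Q₂)
    (g : ℕ → ℕ → ℂ) :
    ∑ c ∈ Finset.range (Q₁ * Q₂), g (c % Q₁) (c % Q₂) =
      ∑ c₁ ∈ Finset.range Q₁, ∑ c₂ ∈ Finset.range Q₂, g c₁ c₂ := by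
  rw [← Finset.sum_product']
  refine Finset.sum_bij' (fun c _ => (c % Q₁, c % Q₂))
    (fun p _ => (Nat.chineseRemainder hco p.1 p.2 : ℕ) % (Q₁ * Q₂)) ?_ ?_ ?_ ?_ ?_
  · intro c hc
    simp [Finset.mem_product, Nat.mod_lt _ hQ₁, Nat.mod_lt _ hQ₂]
  · intro p hp
    exact Finset.mem_range.mpr (Nat.mod_lt _ (by positivity))
  · -- left inverse
    intro c hc
    have hc' := Finset.mem_range.mp hc
    have h1 : (Nat.chineseRemainder hco (c % Q₁) (c % Q₂) : ℕ) ≡ c [MOD Q₁] :=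
      (Nat.chineseRemainder hco (c % Q₁) (c % Q₂)).2.1.trans (Nat.mod_modEq c Q₁)
    have h2 : (Nat.chineseRemainder hco (c % Q₁) (c % Q₂) : ℕ) ≡ c [MOD Q₂] :=
      (Nat.chineseRemainder hco (c % Q₁) (c % Q₂)).2.2.trans (Nat.mod_modEq c Q₂)
    have h12 : (Nat.chineseRemainder hco (c % Q₁) (c % Q₂) : ℕ) ≡ c [MOD Q₁ * Q₂] :=
      (Nat.modEq_and_modEq_iff_modEq_mul hco).mp ⟨h1, h2⟩
    calc (Nat.chineseRemainder hco (c % Q₁) (c % Q₂) : ℕ) % (Q₁ * Q₂)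
        = c % (Q₁ * Q₂) := h12
      _ = c := Nat.mod_eq_of_lt hc'
  · -- right inverse
    intro p hp
    obtain ⟨hp1, hp2⟩ := Finset.mem_product.mp hp
    have hp1' := Finset.mem_range.mp hp1
    have hp2' := Finset.mem_range.mp hp2
    have h1 : (Nat.chineseRemainder hco p.1 p.2 : ℕ) % (Q₁ * Q₂) % Q₁ = p.1 := by
      rw [Nat.mod_mod_of_dvd _ ⟨Q₂, rfl⟩]
      have := (Nat.chineseRemainder hco p.1 p.2).2.1
      unfold Nat.ModEq at this
      rw [this, Nat.mod_eq_of_lt hp1']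
    have h2 : (Nat.chineseRemainder hco p.1 p.2 : ℕ) % (Q₁ * Q₂) % Q₂ = p.2 := by
      rw [Nat.mod_mod_of_dvd _ ⟨Q₁, Nat.mul_comm _ _⟩]
      have := (Nat.chineseRemainder hco p.1 p.2).2.2
      unfold Nat.ModEq at this
      rw [this, Nat.mod_eq_of_lt hp2']
    exact Prod.ext h1 h2
  · intro c hc
    rfl

/-- For a prime `r`, integers `n₀, k` and a positive integer `M₀`, the exponential sum `Σ(q)`
is multiplicative: `Σ(q₁ q₂) = Σ(q₁) Σ(q₂)` for coprime positive integers `q₁, q₂`. -/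
theorem singularSum_multiplicative
    (r : ℕ) (hr : r.Prime) (n₀ k : ℤ) (M₀ : ℕ) (hM₀ : 0 < M₀)
    (q₁ q₂ : ℕ) (hq₁ : 0 < q₁) (hq₂ : 0 < q₂) (hco : Nat.Coprime q₁ q₂) :
    singularSum r n₀ k M₀ (q₁ * q₂) =
      singularSum r n₀ k M₀ q₁ * singularSum r n₀ k M₀ q₂ := by
  classical
  set f : ℕ → ℤ := fun c => (n₀ + (c : ℤ) * (M₀ : ℤ)) ^ r + k with hf
  have hrw : ∀ q : ℕ, singularSum r n₀ k M₀ q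
      = ∑ c ∈ Finset.range (q / Nat.gcd q M₀), innerA q (f c) := fun q => rfl
  set d₁ := Nat.gcd q₁ M₀ with hd₁
  set d₂ := Nat.gcd q₂ M₀ with hd₂
  set Q₁ := q₁ / d₁ with hQ₁def
  set Q₂ := q₂ / d₂ with hQ₂def
  have hd₁dvd : d₁ ∣ q₁ := Nat.gcd_dvd_left _ _
  have hd₂dvd : d₂ ∣ q₂ := Nat.gcd_dvd_left _ _
  have hd₁pos : 0 < d₁ := Nat.gcd_pos_of_pos_left _ hq₁
  have hd₂pos : 0 < d₂ := Nat.gcd_pos_of_pos_left _ hq₂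
  have hQ₁pos : 0 < Q₁ := Nat.div_pos (Nat.le_of_dvd hq₁ hd₁dvd) hd₁pos
  have hQ₂pos : 0 < Q₂ := Nat.div_pos (Nat.le_of_dvd hq₂ hd₂dvd) hd₂pos
  have hQ₁dvd : Q₁ ∣ q₁ := Nat.div_dvd_of_dvd hd₁dvd
  have hQ₂dvd : Q₂ ∣ q₂ := Nat.div_dvd_of_dvd hd₂dvd
  have hQco : Nat.Coprime Q₁ Q₂ :=
    Nat.Coprime.coprime_dvd_right hQ₂dvd (Nat.Coprime.coprime_dvd_left hQ₁dvd hco)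
  have hgcd : Nat.gcd (q₁ * q₂) M₀ = d₁ * d₂ := by
    rw [Nat.gcd_comm, Nat.Coprime.gcd_mul M₀ hco, Nat.gcd_comm M₀ q₁, Nat.gcd_comm M₀ q₂]
  have hdiv : (q₁ * q₂) / (d₁ * d₂) = Q₁ * Q₂ :=
    (Nat.div_mul_div_comm hd₁dvd hd₂dvd).symm
  -- periodicity
  have hper : ∀ (q d Q : ℕ), 0 < q → d = Nat.gcd q M₀ → Q = q / d → ∀ c : ℕ,
      f c ≡ f (c % Q) [ZMOD q] := by
    intro q d Q hqpos hd hQ c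
    have hddvdM : d ∣ M₀ := hd ▸ Nat.gcd_dvd_right _ _
    have hddvdq : d ∣ q := hd ▸ Nat.gcd_dvd_left _ _
    have hd0 : 0 < d := hd ▸ Nat.gcd_pos_of_pos_left _ hqpos
    have hQM : Q * M₀ = q * (M₀ / d) := by
      obtain ⟨t, ht⟩ := hddvdM
      obtain ⟨s, hs⟩ := hddvdq
      have hQs : Q = s := by rw [hQ, hs, Nat.mul_div_cancel_left _ hd0]
      have hMt : M₀ / d = t := by rw [ht, Nat.mul_div_cancel_left _ hd0]
      rw [hQs, hMt, ht, hs]; ring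
    have hqdvd : (q : ℤ) ∣ (Q : ℤ) * (M₀ : ℤ) := by
      refine ⟨(M₀ / d : ℕ), ?_⟩
      exact_mod_cast hQM
    have hc : (c : ℤ) ≡ ((c % Q : ℕ) : ℤ) [ZMOD (Q : ℕ)] :=
      Int.natCast_modEq_iff.mpr (Nat.mod_modEq c Q).symm
    have hstep : (c : ℤ) * (M₀ : ℤ) ≡ ((c % Q : ℕ) : ℤ) * (M₀ : ℤ) [ZMOD (Q : ℤ) * (M₀ : ℤ)] :=
      hc.mul_right'
    have hstep' : (c : ℤ) * (M₀ : ℤ) ≡ ((c % Q : ℕ) : ℤ) * (M₀ : ℤ) [ZMOD (q : ℤ)] :=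
      hstep.of_dvd hqdvd
    exact ((hstep'.add_left n₀).pow r).add_right k
  have hper₁ : ∀ c : ℕ, f c ≡ f (c % Q₁) [ZMOD q₁] := hper q₁ d₁ Q₁ hq₁ hd₁ hQ₁def
  have hper₂ : ∀ c : ℕ, f c ≡ f (c % Q₂) [ZMOD q₂] := hper q₂ d₂ Q₂ hq₂ hd₂ hQ₂def
  rw [hrw, hrw, hrw, hgcd, hdiv, ← hd₁, ← hd₂, ← hQ₁def, ← hQ₂def]
  calc ∑ c ∈ Finset.range (Q₁ * Q₂), innerA (q₁ * q₂) (f c)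
      = ∑ c ∈ Finset.range (Q₁ * Q₂), innerA q₁ (f (c % Q₁)) * innerA q₂ (f (c % Q₂)) := by
        refine Finset.sum_congr rfl fun c _ => ?_
        rw [innerA_mult q₁ q₂ hq₁ hq₂ hco, innerA_congr q₁ hq₁ (hper₁ c),
          innerA_congr q₂ hq₂ (hper₂ c)]
    _ = ∑ c₁ ∈ Finset.range Q₁, ∑ c₂ ∈ Finset.range Q₂, innerA q₁ (f c₁) * innerA q₂ (f c₂) :=
        range_crt_sum hQ₁pos hQ₂pos hQco (fun c₁ c₂ => innerA q₁ (f c₁) * innerA q₂ (f c₂))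
    _ = (∑ c₁ ∈ Finset.range Q₁, innerA q₁ (f c₁)) * ∑ c₂ ∈ Finset.range Q₂, innerA q₂ (f c₂) :=
        (Finset.sum_mul_sum _ _ _ _).symm
end

section
/- Fix a prime r, integers n₀ and k, and a positive integer M₀, and for a positive integer q define Σ(q) := ∑_{c = 0}^{q/gcd(q,M₀) − 1} ∑_{a = 1, gcd(a,q)=1}^{q} e( −a((n₀ + c M₀)^r + k)/q ). Then: (i) for every prime p not dividing M₀, Σ(p) = p·(n_{k,p} − 1); and (ii) for every prime p dividing M₀ such that p does not divide n₀^r + k, Σ(p) = −1. -/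
/-- `nkp r k p` is the number of `u ∈ ℤ/pℤ` with `u ^ r + k ≡ 0 (mod p)`. -/
noncomputable def nkp (r : ℕ) (k : ℤ) (p : ℕ) : ℕ :=
  Nat.card {u : ZMod p // u ^ r + (k : ZMod p) = 0}

lemma exp_inner_sum_aux (p : ℕ) (hp : p.Prime) (m : ℤ) :
    ∑ a ∈ (Finset.Icc 1 p).filter (fun a => Nat.gcd a p = 1),
      Complex.exp (2 * Real.pi * Complex.I * (-(a : ℂ) * (m : ℂ) / (p : ℂ)))
    = if (p : ℤ) ∣ m then (p : ℂ) - 1 else -1 := by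
  have hp0 : (p : ℂ) ≠ 0 := Nat.cast_ne_zero.mpr hp.pos.ne'
  set ζ : ℂ := Complex.exp (2 * Real.pi * Complex.I * (-(m : ℂ) / (p : ℂ))) with hζ
  have hfilter : (Finset.Icc 1 p).filter (fun a => Nat.gcd a p = 1)
      = Finset.Ico 1 p := by
    ext a
    simp only [Finset.mem_filter, Finset.mem_Icc, Finset.mem_Ico]
    constructor
    · rintro ⟨⟨h1, h2⟩, h3⟩
      refine ⟨h1, lt_of_le_of_ne h2 ?_⟩
      rintro rfl
      simp [Nat.gcd_self, hp.ne_one] at h3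
    · rintro ⟨h1, h2⟩
      refine ⟨⟨h1, h2.le⟩, ?_⟩
      have : ¬ p ∣ a := fun hd => absurd (Nat.le_of_dvd (by omega) hd) (by omega)
      exact Nat.Coprime.gcd_eq_one ((Nat.coprime_comm).mp ((hp.coprime_iff_not_dvd).mpr this))
  have hterm : ∀ a : ℕ, Complex.exp (2 * Real.pi * Complex.I * (-(a : ℂ) * (m : ℂ) / (p : ℂ))) = ζ ^ a := by
    intro a
    rw [hζ, ← Complex.exp_nat_mul]
    ring_nf
  have hsum : ∑ a ∈ Finset.Ico 1 p, ζ ^ a = (∑ a ∈ Finset.range p, ζ ^ a) - 1 := by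
    rw [Finset.range_eq_Ico, Finset.sum_eq_sum_Ico_succ_bot hp.pos]
    simp
  rw [hfilter, Finset.sum_congr rfl (fun a _ => hterm a), hsum]
  by_cases hd : (p : ℤ) ∣ m
  · obtain ⟨t, rfl⟩ := hd
    have hζ1 : ζ = 1 := by
      rw [hζ]
      have : 2 * (Real.pi : ℂ) * Complex.I * (-((↑(↑p * t) : ℂ)) / (p : ℂ))
          = (-t : ℤ) * (2 * Real.pi * Complex.I) := by
        push_cast
        field_simp
      rw [this, Complex.exp_int_mul_two_pi_mul_I]
    simp [hζ1, dvd_mul_right, Finset.sum_const, Finset.card_range]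
  · have hζ1 : ζ ≠ 1 := by
      intro h
      rw [hζ, Complex.exp_eq_one_iff] at h
      obtain ⟨n, hn⟩ := h
      apply hd
      have h2 : (2 * (Real.pi : ℂ) * Complex.I) ≠ 0 := by
        simp [Real.pi_ne_zero, Complex.I_ne_zero]
      have h3 : (-(m : ℂ) / (p : ℂ)) = n :=
        mul_left_cancel₀ h2 (by linear_combination hn)
      have h4 : -(m : ℂ) = n * p := by
        field_simp at h3; linear_combination h3
      have h5 : -m = n * p := by exact_mod_cast h4
      exact ⟨-n, by linarith⟩
    have hζp : ζ ^ p = 1 := by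
      rw [hζ, ← Complex.exp_nat_mul]
      have : (p : ℂ) * (2 * Real.pi * Complex.I * (-(m : ℂ) / (p : ℂ)))
          = (-m : ℤ) * (2 * Real.pi * Complex.I) := by
        push_cast
        field_simp
      rw [this, Complex.exp_int_mul_two_pi_mul_I]
    rw [geom_sum_eq hζ1, hζp, if_neg hd]
    simp
lemma card_count_aux (r : ℕ) (n₀ k : ℤ) (M₀ : ℕ) (p : ℕ) (hp : p.Prime) (hM : ¬ p ∣ M₀) :
    ((Finset.range p).filter
      (fun c : ℕ => (p : ℤ) ∣ ((n₀ + (c : ℤ) * (M₀ : ℤ)) ^ r + k))).card = nkp r k p := by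
  haveI : Fact p.Prime := ⟨hp⟩
  have hM0 : (M₀ : ZMod p) ≠ 0 := by
    simpa [ZMod.natCast_eq_zero_iff] using hM
  rw [nkp, Nat.card_eq_fintype_card, Fintype.card_subtype]
  refine Finset.card_bij (fun (c : ℕ) _ => ((n₀ + (c : ℤ) * (M₀ : ℤ) : ℤ) : ZMod p)) ?_ ?_ ?_
  · intro c hc
    simp only [Finset.mem_filter, Finset.mem_range] at hc
    simp only [Finset.mem_filter, Finset.mem_univ, true_and]
    have := (ZMod.intCast_zmod_eq_zero_iff_dvd _ p).mpr hc.2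
    push_cast at this ⊢
    linear_combination this
  · intro c₁ h₁ c₂ h₂ h
    simp only [Finset.mem_filter, Finset.mem_range] at h₁ h₂
    push_cast at h
    have h' : ((c₁ : ZMod p)) = (c₂ : ZMod p) := by
      have := mul_right_cancel₀ hM0 (by linear_combination h :
        (c₁ : ZMod p) * (M₀ : ZMod p) = (c₂ : ZMod p) * (M₀ : ZMod p))
      exact this
    have := (ZMod.natCast_eq_natCast_iff' c₁ c₂ p).mp h'
    rwa [Nat.mod_eq_of_lt h₁.1, Nat.mod_eq_of_lt h₂.1] at this
  · intro u hu
    simp only [Finset.mem_filter, Finset.mem_univ, true_and] at hu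
    refine ⟨((u - (n₀ : ZMod p)) * (M₀ : ZMod p)⁻¹).val, ?_, ?_⟩
    · simp only [Finset.mem_filter, Finset.mem_range]
      constructor
      · exact ZMod.val_lt _
      · rw [← ZMod.intCast_zmod_eq_zero_iff_dvd]
        push_cast
        rw [ZMod.natCast_val, ZMod.cast_id]
        field_simp
        linear_combination hu
    · push_cast
      rw [ZMod.natCast_val, ZMod.cast_id]
      field_simp
      ring

/-- For a prime `r`, integers `n₀, k` and a positive integer `M₀`:
(i) for every prime `p ∤ M₀`, `Σ(p) = p (n_{k,p} - 1)`;
(ii) for every prime `p ∣ M₀` with `p ∤ n₀^r + k`, `Σ(p) = -1`. -/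
theorem singularSum_at_primes
    (r : ℕ) (hr : r.Prime) (n₀ k : ℤ) (M₀ : ℕ) (hM₀ : 0 < M₀) (p : ℕ) (hp : p.Prime) :
    (¬ p ∣ M₀ →
      singularSum r n₀ k M₀ p = (p : ℂ) * ((nkp r k p : ℂ) - 1)) ∧
    (p ∣ M₀ → ¬ (p : ℤ) ∣ (n₀ ^ r + k) →
      singularSum r n₀ k M₀ p = -1) := by
  constructor
  · intro hM
    have hgcd : Nat.gcd p M₀ = 1 := (hp.coprime_iff_not_dvd.mpr hM)
    rw [singularSum, hgcd, Nat.div_one]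
    rw [Finset.sum_congr rfl (fun c _ => exp_inner_sum_aux p hp _)]
    have key : ∀ c ∈ Finset.range p,
        (if (p : ℤ) ∣ ((n₀ + (c : ℤ) * (M₀ : ℤ)) ^ r + k) then (p : ℂ) - 1 else -1)
        = (if (p : ℤ) ∣ ((n₀ + (c : ℤ) * (M₀ : ℤ)) ^ r + k) then (p : ℂ) else 0) - 1 := by
      intro c _; split <;> ring
    rw [Finset.sum_congr rfl key, Finset.sum_sub_distrib, ← Finset.sum_filter,
      Finset.sum_const, Finset.sum_const, Finset.card_range, card_count_aux r n₀ k M₀ p hp hM]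
    simp only [nsmul_eq_mul, mul_one]
    ring
  · intro hM hnk
    have hgcd : Nat.gcd p M₀ = p := Nat.gcd_eq_left hM
    rw [singularSum, hgcd, Nat.div_self hp.pos]
    rw [Finset.sum_range_one]
    rw [exp_inner_sum_aux p hp _]
    simp only [Nat.cast_zero, zero_mul, add_zero]
    rw [if_neg hnk]
end
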